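/- Let 1 < p ≤ ∞ and 1 ≤ q ≤ ∞. The functional ‖·‖_{p,q} built from the maximal rearrangement f** satisfies the triangle inequality: for all measurable functions f and g on (E, μ), ‖f + g‖_{p,q} ≤ ‖f‖_{p,q} + ‖g‖_{p,q} (so that ‖·‖_{p,q} is a norm on L(p,q)). -/

import Mathlib

open MeasureTheory Set ENNReal Filter

noncomputable section

/-- The distribution function `μ_f(λ) = μ {x : |f x| > λ}`. -/
def distrib {E : Type*} [MeasurableSpace E] (μ : Measure E) (f : E → ℂ) (lam : ℝ≥0∞) : ℝ≥0∞ :=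
  μ {x | lam < (‖f x‖₊ : ℝ≥0∞)}

/-- The non-increasing rearrangement `f*(t) = inf {λ ≥ 0 : μ_f(λ) ≤ t}`. -/
def rearr {E : Type*} [MeasurableSpace E] (μ : Measure E) (f : E → ℂ) (t : ℝ≥0∞) : ℝ≥0∞ :=
  sInf {lam : ℝ≥0∞ | distrib μ f lam ≤ t}

/-- The Lorentz quasi-norm `‖f‖*_{p,q}`: for `q < ∞` it is
`(∫_0^∞ (t^{1/p} f*(t))^q dt/t)^{1/q}`, and for `q = ∞` it is `sup_{t>0} t^{1/p} f*(t)`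
(with the convention `1/∞ = 0` for the exponent `1/p`). -/
def lorentzQ {E : Type*} [MeasurableSpace E] (μ : Measure E) (f : E → ℂ)
    (p q : ℝ≥0∞) : ℝ≥0∞ :=
  if q = ∞ then
    ⨆ (t : ℝ) (_ : 0 < t), ENNReal.ofReal t ^ p⁻¹.toReal * rearr μ f (ENNReal.ofReal t)
  else
    (∫⁻ t in Ioi (0 : ℝ),
        (ENNReal.ofReal t ^ p⁻¹.toReal * rearr μ f (ENNReal.ofReal t)) ^ q.toReal
          / ENNReal.ofReal t) ^ (1 / q.toReal)

/-- The maximal rearrangement `f**(t) = (1/t) ∫_0^t f*(u) du`. -/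
def maxRearr {E : Type*} [MeasurableSpace E] (μ : Measure E) (f : E → ℂ) (t : ℝ) : ℝ≥0∞ :=
  (∫⁻ u in Ioo (0 : ℝ) t, rearr μ f (ENNReal.ofReal u)) / ENNReal.ofReal t

/-- The Lorentz norm `‖f‖_{p,q}`, defined as `‖f‖*_{p,q}` but with the maximal
rearrangement `f**` in place of `f*`. -/
def lorentzN {E : Type*} [MeasurableSpace E] (μ : Measure E) (f : E → ℂ)
    (p q : ℝ≥0∞) : ℝ≥0∞ :=
  if q = ∞ then
    ⨆ (t : ℝ) (_ : 0 < t), ENNReal.ofReal t ^ p⁻¹.toReal * maxRearr μ f t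
  else
    (∫⁻ t in Ioi (0 : ℝ),
        (ENNReal.ofReal t ^ p⁻¹.toReal * maxRearr μ f t) ^ q.toReal
          / ENNReal.ofReal t) ^ (1 / q.toReal)

section Aux

variable {E : Type*} [MeasurableSpace E] (μ : Measure E)

lemma distrib_anti (f : E → ℂ) : Antitone (distrib μ f) :=
  fun _a _b hab => measure_mono fun _x hx => lt_of_le_of_lt hab hx

lemma distrib_top (f : E → ℂ) : distrib μ f ∞ = 0 := by
  have h : {x | (∞ : ℝ≥0∞) < (‖f x‖₊ : ℝ≥0∞)} = ∅ := by
    ext x; simp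
  simp [distrib, h]

lemma distrib_add_le (f g : E → ℂ) (a b : ℝ≥0∞) :
    distrib μ (f + g) (a + b) ≤ distrib μ f a + distrib μ g b := by
  have hsub : {x | a + b < (‖(f + g) x‖₊ : ℝ≥0∞)} ⊆
      {x | a < (‖f x‖₊ : ℝ≥0∞)} ∪ {x | b < (‖g x‖₊ : ℝ≥0∞)} := by
    intro x hx
    simp only [mem_setOf_eq, Pi.add_apply] at hx
    by_contra hc
    simp only [mem_union, mem_setOf_eq, not_or, not_lt] at hc
    refine absurd hx (not_lt.mpr ?_)
    calc (‖f x + g x‖₊ : ℝ≥0∞) ≤ (‖f x‖₊ : ℝ≥0∞) + (‖g x‖₊ : ℝ≥0∞) := by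
          exact_mod_cast nnnorm_add_le _ _
      _ ≤ a + b := add_le_add hc.1 hc.2
  exact le_trans (measure_mono hsub) (measure_union_le _ _)

lemma rearr_le_iff (f : E → ℂ) {u s : ℝ≥0∞} :
    rearr μ f u ≤ s ↔ distrib μ f s ≤ u := by
  constructor
  · intro h
    rcases eq_or_ne s ∞ with rfl | hs
    · simp [distrib_top]
    · have key : ∀ n : ℕ, distrib μ f (s + ((n : ℝ≥0∞) + 1)⁻¹) ≤ u := by
        intro n
        have hpos : s < s + ((n : ℝ≥0∞) + 1)⁻¹ :=
          ENNReal.lt_add_right hs (by simp)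
        obtain ⟨lam, hlam, hlt⟩ := sInf_lt_iff.mp (lt_of_le_of_lt h hpos)
        exact le_trans (distrib_anti μ f hlt.le) hlam
      have hU : {x | s < (‖f x‖₊ : ℝ≥0∞)} =
          ⋃ n : ℕ, {x | s + ((n : ℝ≥0∞) + 1)⁻¹ < (‖f x‖₊ : ℝ≥0∞)} := by
        ext x
        simp only [mem_setOf_eq, mem_iUnion]
        constructor
        · intro hx
          have hd : (‖f x‖₊ : ℝ≥0∞) - s ≠ 0 := (tsub_pos_of_lt hx).ne'
          obtain ⟨n, hn⟩ := ENNReal.exists_inv_nat_lt hd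
          refine ⟨n, ?_⟩
          have h1 : ((n : ℝ≥0∞) + 1)⁻¹ < (‖f x‖₊ : ℝ≥0∞) - s :=
            lt_of_le_of_lt (ENNReal.inv_le_inv.mpr le_self_add) hn
          calc s + ((n : ℝ≥0∞) + 1)⁻¹ < s + ((‖f x‖₊ : ℝ≥0∞) - s) :=
                ENNReal.add_lt_add_left hs h1
            _ = (‖f x‖₊ : ℝ≥0∞) := add_tsub_cancel_of_le hx.le
        · rintro ⟨n, hn⟩
          exact lt_of_le_of_lt le_self_add hn
      have hmono : Monotone (fun n : ℕ =>
          {x | s + ((n : ℝ≥0∞) + 1)⁻¹ < (‖f x‖₊ : ℝ≥0∞)}) := by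
        intro m n hmn x hx
        refine lt_of_le_of_lt (add_le_add_right (ENNReal.inv_le_inv.mpr
          (add_le_add_left (by exact_mod_cast hmn : (m : ℝ≥0∞) ≤ n) 1)) s) hx
      calc distrib μ f s = ⨆ n : ℕ, distrib μ f (s + ((n : ℝ≥0∞) + 1)⁻¹) := by
            rw [distrib, hU]; exact Directed.measure_iUnion hmono.directed_le
        _ ≤ u := iSup_le key
  · intro h
    exact sInf_le h

lemma lt_rearr_iff (f : E → ℂ) {u s : ℝ≥0∞} :
    s < rearr μ f u ↔ u < distrib μ f s := by
  rw [← not_le, ← not_le, rearr_le_iff]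

lemma rearr_anti (f : E → ℂ) : Antitone (rearr μ f) :=
  fun _a _b hab => sInf_le_sInf fun _lam hl => le_trans hl hab

lemma rearr_comp_measurable (f : E → ℂ) :
    Measurable fun u : ℝ => rearr μ f (ENNReal.ofReal u) :=
  Antitone.measurable fun _a _b hab => rearr_anti μ f (ENNReal.ofReal_le_ofReal hab)

lemma distrib_comp_measurable (f : E → ℂ) :
    Measurable fun s : ℝ => distrib μ f (ENNReal.ofReal s) :=
  Antitone.measurable fun _a _b hab => distrib_anti μ f (ENNReal.ofReal_le_ofReal hab)

lemma slice_eq (c : ℝ≥0∞) :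
    ∫⁻ s in Ioi (0 : ℝ), (if ENNReal.ofReal s < c then (1 : ℝ≥0∞) else 0) = c := by
  have hmeas : MeasurableSet {s : ℝ | ENNReal.ofReal s < c} :=
    measurableSet_lt ENNReal.measurable_ofReal measurable_const
  have h1 : ∫⁻ s in Ioi (0 : ℝ), (if ENNReal.ofReal s < c then (1 : ℝ≥0∞) else 0)
      = volume ({s : ℝ | ENNReal.ofReal s < c} ∩ Ioi 0) := by
    rw [← lintegral_indicator_one (hmeas.inter measurableSet_Ioi),
      ← lintegral_indicator measurableSet_Ioi]
    congr 1
    ext s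
    by_cases hs : s ∈ Ioi (0 : ℝ) <;> by_cases hc : ENNReal.ofReal s < c <;>
      simp [indicator, hs, hc]
  rw [h1]
  rcases eq_or_ne c ∞ with rfl | hc
  · have h2 : {s : ℝ | ENNReal.ofReal s < ∞} = univ := by
      ext s; simp [ENNReal.ofReal_lt_top]
    rw [h2, univ_inter, Real.volume_Ioi]
  · have h2 : {s : ℝ | ENNReal.ofReal s < c} ∩ Ioi 0 = Ioo 0 c.toReal := by
      ext s
      simp only [mem_inter_iff, mem_setOf_eq, mem_Ioi, mem_Ioo]
      constructor
      · rintro ⟨hl, hr⟩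
        exact ⟨hr, (ENNReal.ofReal_lt_iff_lt_toReal hr.le hc).mp hl⟩
      · rintro ⟨hl, hr⟩
        exact ⟨(ENNReal.ofReal_lt_iff_lt_toReal hl.le hc).mpr hr, hl⟩
    rw [h2, Real.volume_Ioo, sub_zero, ENNReal.ofReal_toReal hc]

lemma layer_repr (G : ℝ → ℝ≥0∞) (hG : Measurable G) (t : ℝ) :
    ∫⁻ u in Ioo (0 : ℝ) t, G u
      = ∫⁻ s in Ioi (0 : ℝ), volume ({u | ENNReal.ofReal s < G u} ∩ Ioo 0 t) := by
  have hmeas : Measurable (Function.uncurry fun (u s : ℝ) =>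
      (if ENNReal.ofReal s < G u then (1 : ℝ≥0∞) else 0)) := by
    refine Measurable.ite ?_ measurable_const measurable_const
    exact measurableSet_lt (ENNReal.measurable_ofReal.comp measurable_snd)
      (hG.comp measurable_fst)
  calc ∫⁻ u in Ioo (0 : ℝ) t, G u
      = ∫⁻ u in Ioo (0 : ℝ) t, ∫⁻ s in Ioi (0 : ℝ),
          (if ENNReal.ofReal s < G u then (1 : ℝ≥0∞) else 0) :=
        lintegral_congr fun u => (slice_eq (G u)).symm
    _ = ∫⁻ s in Ioi (0 : ℝ), ∫⁻ u in Ioo (0 : ℝ) t,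
          (if ENNReal.ofReal s < G u then (1 : ℝ≥0∞) else 0) :=
        lintegral_lintegral_swap hmeas.aemeasurable
    _ = ∫⁻ s in Ioi (0 : ℝ), volume ({u | ENNReal.ofReal s < G u} ∩ Ioo 0 t) := by
        refine lintegral_congr fun s => ?_
        have hmeas2 : MeasurableSet {u : ℝ | ENNReal.ofReal s < G u} :=
          measurableSet_lt measurable_const hG
        rw [← lintegral_indicator_one (hmeas2.inter measurableSet_Ioo),
          ← lintegral_indicator measurableSet_Ioo]
        congr 1
        ext u
        by_cases hu : u ∈ Ioo (0 : ℝ) t <;> by_cases hc : ENNReal.ofReal s < G u <;>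
          simp [indicator, hu, hc]

lemma N_repr (f : E → ℂ) (t : ℝ) :
    ∫⁻ u in Ioo (0 : ℝ) t, rearr μ f (ENNReal.ofReal u)
      = ∫⁻ s in Ioi (0 : ℝ), min (ENNReal.ofReal t) (distrib μ f (ENNReal.ofReal s)) := by
  rw [layer_repr _ (rearr_comp_measurable μ f) t]
  refine lintegral_congr fun s => ?_
  have hset : {u : ℝ | ENNReal.ofReal s < rearr μ f (ENNReal.ofReal u)} ∩ Ioo 0 t
      = {u : ℝ | ENNReal.ofReal u < distrib μ f (ENNReal.ofReal s)} ∩ Ioo 0 t := by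
    ext u
    simp only [mem_inter_iff, mem_setOf_eq, lt_rearr_iff]
  rw [hset]
  set D := distrib μ f (ENNReal.ofReal s) with hD
  rcases eq_or_ne D ∞ with hDt | hDt
  · rw [hDt]
    have h2 : {u : ℝ | ENNReal.ofReal u < (∞ : ℝ≥0∞)} = univ := by
      ext u; simp [ENNReal.ofReal_lt_top]
    rw [h2, univ_inter, Real.volume_Ioo, sub_zero, min_eq_left le_top]
  · have hIoo : {u : ℝ | ENNReal.ofReal u < D} ∩ Ioo 0 t = Ioo 0 (min t D.toReal) := by
      ext u
      simp only [mem_inter_iff, mem_setOf_eq, mem_Ioo, lt_min_iff]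
      constructor
      · rintro ⟨h1, h2, h3⟩
        exact ⟨h2, h3, (ENNReal.ofReal_lt_iff_lt_toReal h2.le hDt).mp h1⟩
      · rintro ⟨h1, h2, h3⟩
        exact ⟨(ENNReal.ofReal_lt_iff_lt_toReal h1.le hDt).mpr h3, h1, h2⟩
    rw [hIoo, Real.volume_Ioo, sub_zero,
      Monotone.map_min (fun _ _ h => ENNReal.ofReal_le_ofReal h),
      ENNReal.ofReal_toReal hDt]

lemma minint_le (f : E → ℂ) (t lam : ℝ) (hlam : 0 ≤ lam) :
    ∫⁻ s in Ioi (0 : ℝ), min (ENNReal.ofReal t) (distrib μ f (ENNReal.ofReal s))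
      ≤ ENNReal.ofReal lam * ENNReal.ofReal t
        + ∫⁻ s in Ioi lam, distrib μ f (ENNReal.ofReal s) := by
  rw [← Ioc_union_Ioi_eq_Ioi hlam,
    lintegral_union measurableSet_Ioi (Ioc_disjoint_Ioi le_rfl)]
  refine add_le_add ?_ (lintegral_mono fun s => min_le_right _ _)
  calc ∫⁻ s in Ioc (0 : ℝ) lam, min (ENNReal.ofReal t) (distrib μ f (ENNReal.ofReal s))
      ≤ ∫⁻ _ in Ioc (0 : ℝ) lam, ENNReal.ofReal t :=
        lintegral_mono fun s => min_le_left _ _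
    _ = ENNReal.ofReal t * volume (Ioc (0 : ℝ) lam) := setLIntegral_const _ _
    _ = ENNReal.ofReal lam * ENNReal.ofReal t := by
        rw [Real.volume_Ioc, sub_zero, mul_comm]

lemma minint_ge (f : E → ℂ) {t : ℝ} (ht : 0 < t)
    (hfin : rearr μ f (ENNReal.ofReal t) ≠ ∞) :
    ENNReal.ofReal (rearr μ f (ENNReal.ofReal t)).toReal * ENNReal.ofReal t
        + ∫⁻ s in Ioi (rearr μ f (ENNReal.ofReal t)).toReal,
            distrib μ f (ENNReal.ofReal s)
      ≤ ∫⁻ s in Ioi (0 : ℝ), min (ENNReal.ofReal t) (distrib μ f (ENNReal.ofReal s)) := by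
  set lam := (rearr μ f (ENNReal.ofReal t)).toReal with hlamdef
  have hlam : 0 ≤ lam := ENNReal.toReal_nonneg
  have hofR : ENNReal.ofReal lam = rearr μ f (ENNReal.ofReal t) := ENNReal.ofReal_toReal hfin
  rw [← Ioc_union_Ioi_eq_Ioi hlam,
    lintegral_union measurableSet_Ioi (Ioc_disjoint_Ioi le_rfl)]
  have hminmeas : Measurable fun s : ℝ =>
      min (ENNReal.ofReal t) (distrib μ f (ENNReal.ofReal s)) :=
    measurable_const.min (distrib_comp_measurable μ f)
  refine add_le_add ?_ ?_
  · have heq : ∫⁻ s in Ioc (0 : ℝ) lam,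
        min (ENNReal.ofReal t) (distrib μ f (ENNReal.ofReal s))
        = ∫⁻ s in Ioo (0 : ℝ) lam,
            min (ENNReal.ofReal t) (distrib μ f (ENNReal.ofReal s)) :=
      (setLIntegral_congr Ioo_ae_eq_Ioc).symm
    rw [heq]
    have hbound : ∀ s ∈ Ioo (0 : ℝ) lam,
        ENNReal.ofReal t ≤ min (ENNReal.ofReal t) (distrib μ f (ENNReal.ofReal s)) := by
      intro s hs
      obtain ⟨hs1, hs2⟩ := hs
      refine le_min le_rfl ?_
      have h1 : ENNReal.ofReal s < rearr μ f (ENNReal.ofReal t) := by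
        rw [← hofR]
        exact (ENNReal.ofReal_lt_ofReal_iff_of_nonneg hs1.le).mpr hs2
      exact ((lt_rearr_iff μ f).mp h1).le
    calc ENNReal.ofReal lam * ENNReal.ofReal t
        = ENNReal.ofReal t * volume (Ioo (0 : ℝ) lam) := by
          rw [Real.volume_Ioo, sub_zero, mul_comm]
      _ = ∫⁻ _ in Ioo (0 : ℝ) lam, ENNReal.ofReal t := (setLIntegral_const _ _).symm
      _ ≤ _ := setLIntegral_mono hminmeas hbound
  · refine setLIntegral_mono hminmeas fun s hs => ?_
    have h1 : rearr μ f (ENNReal.ofReal t) ≤ ENNReal.ofReal s := by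
      rw [← hofR]
      exact ENNReal.ofReal_le_ofReal (mem_Ioi.mp hs).le
    exact le_min ((rearr_le_iff μ f).mp h1) le_rfl

lemma slab_eq {a : ℝ} (ha : 0 ≤ a) (c : NNReal) :
    ∫⁻ s in Ioi a, (if ENNReal.ofReal s < (c : ℝ≥0∞) then (1 : ℝ≥0∞) else 0)
      = (c : ℝ≥0∞) - ENNReal.ofReal a := by
  have hmeas : MeasurableSet {s : ℝ | ENNReal.ofReal s < (c : ℝ≥0∞)} :=
    measurableSet_lt ENNReal.measurable_ofReal measurable_const
  have h1 : ∫⁻ s in Ioi a, (if ENNReal.ofReal s < (c : ℝ≥0∞) then (1 : ℝ≥0∞) else 0)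
      = volume ({s : ℝ | ENNReal.ofReal s < (c : ℝ≥0∞)} ∩ Ioi a) := by
    rw [← lintegral_indicator_one (hmeas.inter measurableSet_Ioi),
      ← lintegral_indicator measurableSet_Ioi]
    congr 1
    ext s
    by_cases hs : s ∈ Ioi a <;> by_cases hc : ENNReal.ofReal s < (c : ℝ≥0∞) <;>
      simp [indicator, hs, hc]
  rw [h1]
  have h2 : {s : ℝ | ENNReal.ofReal s < (c : ℝ≥0∞)} ∩ Ioi a
      = Ioo a ((c : ℝ≥0∞)).toReal := by
    ext s
    simp only [mem_inter_iff, mem_setOf_eq, mem_Ioi, mem_Ioo]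
    constructor
    · rintro ⟨hl, hr⟩
      exact ⟨hr, (ENNReal.ofReal_lt_iff_lt_toReal (le_trans ha hr.le) ENNReal.coe_ne_top).mp hl⟩
    · rintro ⟨hl, hr⟩
      exact ⟨(ENNReal.ofReal_lt_iff_lt_toReal (le_trans ha hl.le) ENNReal.coe_ne_top).mpr hr, hl⟩
  rw [h2, Real.volume_Ioo, ENNReal.ofReal_sub _ ha,
    ENNReal.ofReal_toReal ENNReal.coe_ne_top]

lemma tail_eq [SFinite μ] (f : E → ℂ) (hf : Measurable f) {a : ℝ} (ha : 0 ≤ a) :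
    ∫⁻ s in Ioi a, distrib μ f (ENNReal.ofReal s)
      = ∫⁻ x, ((‖f x‖₊ : ℝ≥0∞) - ENNReal.ofReal a) ∂μ := by
  have hmeasu : Measurable (Function.uncurry fun (s : ℝ) (x : E) =>
      (if ENNReal.ofReal s < (‖f x‖₊ : ℝ≥0∞) then (1 : ℝ≥0∞) else 0)) := by
    refine Measurable.ite ?_ measurable_const measurable_const
    exact measurableSet_lt (ENNReal.measurable_ofReal.comp measurable_fst)
      (hf.nnnorm.coe_nnreal_ennreal.comp measurable_snd)
  calc ∫⁻ s in Ioi a, distrib μ f (ENNReal.ofReal s)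
      = ∫⁻ s in Ioi a, ∫⁻ x,
          (if ENNReal.ofReal s < (‖f x‖₊ : ℝ≥0∞) then (1 : ℝ≥0∞) else 0) ∂μ := by
        refine lintegral_congr fun s => ?_
        rw [distrib, ← lintegral_indicator_one (measurableSet_lt measurable_const hf.nnnorm.coe_nnreal_ennreal)]
        exact lintegral_congr fun x => by
          simp [Set.indicator_apply, Set.mem_setOf_eq]
    _ = ∫⁻ x, (∫⁻ s in Ioi a,
          (if ENNReal.ofReal s < (‖f x‖₊ : ℝ≥0∞) then (1 : ℝ≥0∞) else 0)) ∂μ :=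
        lintegral_lintegral_swap hmeasu.aemeasurable
    _ = ∫⁻ x, ((‖f x‖₊ : ℝ≥0∞) - ENNReal.ofReal a) ∂μ :=
        lintegral_congr fun x => slab_eq ha ‖f x‖₊

lemma tail_subadd [SFinite μ] (f g : E → ℂ) (hf : Measurable f) (hg : Measurable g)
    {a b : ℝ} (ha : 0 ≤ a) (hb : 0 ≤ b) :
    ∫⁻ s in Ioi (a + b), distrib μ (f + g) (ENNReal.ofReal s)
      ≤ (∫⁻ s in Ioi a, distrib μ f (ENNReal.ofReal s))
        + ∫⁻ s in Ioi b, distrib μ g (ENNReal.ofReal s) := by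
  rw [tail_eq μ (f + g) (hf.add hg) (by linarith), tail_eq μ f hf ha, tail_eq μ g hg hb,
    ← lintegral_add_left (f := fun x => (‖f x‖₊ : ℝ≥0∞) - ENNReal.ofReal a)
      (hf.nnnorm.coe_nnreal_ennreal.sub measurable_const)]
  refine lintegral_mono fun x => ?_
  have h1 : (‖(f + g) x‖₊ : ℝ≥0∞) ≤ (‖f x‖₊ : ℝ≥0∞) + (‖g x‖₊ : ℝ≥0∞) := by
    simp only [Pi.add_apply]
    exact_mod_cast nnnorm_add_le _ _
  rw [ENNReal.ofReal_add ha hb]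
  exact le_trans (tsub_le_tsub_right h1 _) add_tsub_add_le_tsub_add_tsub

lemma N_subadd [SFinite μ] (f g : E → ℂ) (hf : Measurable f) (hg : Measurable g)
    {t : ℝ} (ht : 0 < t) :
    (∫⁻ u in Ioo (0 : ℝ) t, rearr μ (f + g) (ENNReal.ofReal u))
      ≤ (∫⁻ u in Ioo (0 : ℝ) t, rearr μ f (ENNReal.ofReal u))
        + ∫⁻ u in Ioo (0 : ℝ) t, rearr μ g (ENNReal.ofReal u) := by
  have hinf : ∀ h : E → ℂ, rearr μ h (ENNReal.ofReal t) = ∞ →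
      (∫⁻ u in Ioo (0 : ℝ) t, rearr μ h (ENNReal.ofReal u)) = ∞ := by
    intro h hh
    rw [N_repr]
    have hmin : ∀ s ∈ Ioi (0 : ℝ),
        min (ENNReal.ofReal t) (distrib μ h (ENNReal.ofReal s)) = ENNReal.ofReal t := by
      intro s _
      refine min_eq_left ?_
      have h1 : ENNReal.ofReal s < rearr μ h (ENNReal.ofReal t) := by
        rw [hh]; exact ENNReal.ofReal_lt_top
      exact ((lt_rearr_iff μ h).mp h1).le
    rw [setLIntegral_congr_fun measurableSet_Ioi hmin, setLIntegral_const,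
      Real.volume_Ioi, ENNReal.mul_top (ENNReal.ofReal_pos.mpr ht).ne']
  rcases eq_or_ne (rearr μ f (ENNReal.ofReal t)) ∞ with h1 | h1
  · rw [hinf f h1]; simp
  rcases eq_or_ne (rearr μ g (ENNReal.ofReal t)) ∞ with h2 | h2
  · rw [hinf g h2]; simp
  set a := (rearr μ f (ENNReal.ofReal t)).toReal with hadef
  set b := (rearr μ g (ENNReal.ofReal t)).toReal with hbdef
  have ha : 0 ≤ a := ENNReal.toReal_nonneg
  have hb : 0 ≤ b := ENNReal.toReal_nonneg
  calc (∫⁻ u in Ioo (0 : ℝ) t, rearr μ (f + g) (ENNReal.ofReal u))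
      = ∫⁻ s in Ioi (0 : ℝ), min (ENNReal.ofReal t) (distrib μ (f + g) (ENNReal.ofReal s)) :=
        N_repr μ (f + g) t
    _ ≤ ENNReal.ofReal (a + b) * ENNReal.ofReal t
        + ∫⁻ s in Ioi (a + b), distrib μ (f + g) (ENNReal.ofReal s) :=
        minint_le μ (f + g) t (a + b) (by linarith)
    _ ≤ (ENNReal.ofReal a * ENNReal.ofReal t
          + ∫⁻ s in Ioi a, distrib μ f (ENNReal.ofReal s))
        + (ENNReal.ofReal b * ENNReal.ofReal t
          + ∫⁻ s in Ioi b, distrib μ g (ENNReal.ofReal s)) := by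
        rw [ENNReal.ofReal_add ha hb, add_mul]
        calc ENNReal.ofReal a * ENNReal.ofReal t + ENNReal.ofReal b * ENNReal.ofReal t
              + ∫⁻ s in Ioi (a + b), distrib μ (f + g) (ENNReal.ofReal s)
            ≤ ENNReal.ofReal a * ENNReal.ofReal t + ENNReal.ofReal b * ENNReal.ofReal t
              + ((∫⁻ s in Ioi a, distrib μ f (ENNReal.ofReal s))
                + ∫⁻ s in Ioi b, distrib μ g (ENNReal.ofReal s)) :=
              add_le_add le_rfl (tail_subadd μ f g hf hg ha hb)
          _ = _ := by ring
    _ ≤ (∫⁻ s in Ioi (0 : ℝ), min (ENNReal.ofReal t) (distrib μ f (ENNReal.ofReal s)))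
        + ∫⁻ s in Ioi (0 : ℝ), min (ENNReal.ofReal t) (distrib μ g (ENNReal.ofReal s)) :=
        add_le_add (minint_ge μ f ht h1) (minint_ge μ g ht h2)
    _ = _ := by rw [← N_repr, ← N_repr]

lemma maxRearr_subadd [SFinite μ] (f g : E → ℂ) (hf : Measurable f) (hg : Measurable g)
    {t : ℝ} (ht : 0 < t) :
    maxRearr μ (f + g) t ≤ maxRearr μ f t + maxRearr μ g t := by
  rw [maxRearr, maxRearr, maxRearr, ENNReal.div_add_div_same]
  exact ENNReal.div_le_div_right (N_subadd μ f g hf hg ht) _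

lemma maxRearr_measurable (f : E → ℂ) : Measurable fun t : ℝ => maxRearr μ f t := by
  have h1 : Monotone fun t : ℝ => ∫⁻ u in Ioo (0 : ℝ) t, rearr μ f (ENNReal.ofReal u) :=
    fun _t1 _t2 h => lintegral_mono_set (Ioo_subset_Ioo le_rfl h)
  exact h1.measurable.div ENNReal.measurable_ofReal

end Aux

/-- For `1 < p ≤ ∞` and `1 ≤ q ≤ ∞`, the functional `‖·‖_{p,q}` built from the maximal
rearrangement `f**` satisfies the triangle inequality:
`‖f + g‖_{p,q} ≤ ‖f‖_{p,q} + ‖g‖_{p,q}`. -/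
theorem lorentzN_triangle {E : Type*} [MeasurableSpace E] (μ : Measure E)
    [SigmaFinite μ] [NullSingletonClass μ] (p q : ℝ≥0∞) (hp : 1 < p) (hq : 1 ≤ q)
    (f g : E → ℂ) (hf : Measurable f) (hg : Measurable g) :
    lorentzN μ (f + g) p q ≤ lorentzN μ f p q + lorentzN μ g p q := by
  have hsub : ∀ t : ℝ, 0 < t →
      ENNReal.ofReal t ^ p⁻¹.toReal * maxRearr μ (f + g) t
        ≤ ENNReal.ofReal t ^ p⁻¹.toReal * maxRearr μ f t
          + ENNReal.ofReal t ^ p⁻¹.toReal * maxRearr μ g t := by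
    intro t ht
    rw [← mul_add]
    exact mul_le_mul_right (maxRearr_subadd μ f g hf hg ht) _
  rcases eq_or_ne q ∞ with rfl | hq'
  · simp only [lorentzN, if_pos rfl]
    refine iSup₂_le fun t ht => le_trans (hsub t ht) (add_le_add ?_ ?_)
    · exact le_iSup₂ (f := fun (t : ℝ) (_ : 0 < t) =>
        ENNReal.ofReal t ^ p⁻¹.toReal * maxRearr μ f t) t ht
    · exact le_iSup₂ (f := fun (t : ℝ) (_ : 0 < t) =>
        ENNReal.ofReal t ^ p⁻¹.toReal * maxRearr μ g t) t ht
  · have hc : (1 : ℝ) ≤ q.toReal := by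
      have := ENNReal.toReal_mono hq' hq
      simpa using this
    have hc0 : (0 : ℝ) < q.toReal := lt_of_lt_of_le one_pos hc
    set c := q.toReal with hcdef
    have hkey : ∀ X Y : ℝ≥0∞, (X * Y ^ (-(1 / c))) ^ c = X ^ c / Y := by
      intro X Y
      rw [ENNReal.mul_rpow_of_nonneg _ _ hc0.le, ← ENNReal.rpow_mul,
        neg_mul, one_div, inv_mul_cancel₀ hc0.ne', ENNReal.rpow_neg_one, div_eq_mul_inv]
    have hrw : ∀ h : E → ℂ, lorentzN μ h p q = (∫⁻ t in Ioi (0 : ℝ),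
        ((ENNReal.ofReal t ^ p⁻¹.toReal * maxRearr μ h t)
          * ENNReal.ofReal t ^ (-(1 / c))) ^ c) ^ (1 / c) := by
      intro h
      rw [lorentzN, if_neg hq']
      congr 1
      exact lintegral_congr fun t => (hkey _ _).symm
    have hmf : Measurable fun t : ℝ =>
        (ENNReal.ofReal t ^ p⁻¹.toReal * maxRearr μ f t) * ENNReal.ofReal t ^ (-(1 / c)) :=
      ((ENNReal.measurable_ofReal.pow_const _).mul (maxRearr_measurable μ f)).mul
        (ENNReal.measurable_ofReal.pow_const _)
    have hmg : Measurable fun t : ℝ =>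
        (ENNReal.ofReal t ^ p⁻¹.toReal * maxRearr μ g t) * ENNReal.ofReal t ^ (-(1 / c)) :=
      ((ENNReal.measurable_ofReal.pow_const _).mul (maxRearr_measurable μ g)).mul
        (ENNReal.measurable_ofReal.pow_const _)
    rw [hrw (f + g), hrw f, hrw g]
    have step1 : (∫⁻ t in Ioi (0 : ℝ),
        ((ENNReal.ofReal t ^ p⁻¹.toReal * maxRearr μ (f + g) t)
          * ENNReal.ofReal t ^ (-(1 / c))) ^ c)
        ≤ ∫⁻ t in Ioi (0 : ℝ),
          ((ENNReal.ofReal t ^ p⁻¹.toReal * maxRearr μ f t) * ENNReal.ofReal t ^ (-(1 / c))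
            + (ENNReal.ofReal t ^ p⁻¹.toReal * maxRearr μ g t)
              * ENNReal.ofReal t ^ (-(1 / c))) ^ c := by
      refine setLIntegral_mono ((hmf.add hmg).pow_const _) fun t ht => ?_
      refine ENNReal.rpow_le_rpow ?_ hc0.le
      rw [← add_mul]
      exact mul_le_mul_left (hsub t (mem_Ioi.mp ht)) _
    calc (∫⁻ t in Ioi (0 : ℝ),
        ((ENNReal.ofReal t ^ p⁻¹.toReal * maxRearr μ (f + g) t)
          * ENNReal.ofReal t ^ (-(1 / c))) ^ c) ^ (1 / c)
        ≤ (∫⁻ t in Ioi (0 : ℝ),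
          ((ENNReal.ofReal t ^ p⁻¹.toReal * maxRearr μ f t) * ENNReal.ofReal t ^ (-(1 / c))
            + (ENNReal.ofReal t ^ p⁻¹.toReal * maxRearr μ g t)
              * ENNReal.ofReal t ^ (-(1 / c))) ^ c) ^ (1 / c) :=
          ENNReal.rpow_le_rpow step1 (by positivity)
      _ ≤ _ := ENNReal.lintegral_Lp_add_le hmf.aemeasurable hmg.aemeasurable hc
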